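/- Let m ∈ ℕ, n = 2m+1, and let s : Fin n → ℝ be injective. Define the median med(s) as the (m+1)-th smallest value of s, i.e., med(s) = (s ∘ σ) m for any permutation σ of Fin n such that s ∘ σ is monotone. Let k ∈ Fin n and let s̃ : Fin n → ℝ satisfy s̃ j = s j for every j ≠ k. If s k < med(s) and s̃ k > med(s), then med(s̃) > med(s); symmetrically, if s k > med(s) and s̃ k < med(s), then med(s̃) < med(s). -/

import Mathlib

open Finset

private lemma med_le_count (m : ℕ) (t : Fin (2*m+1) → ℝ) (τ : Equiv.Perm (Fin (2*m+1)))
    (h : Monotone (t ∘ τ)) :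
    m + 1 ≤ (Finset.univ.filter (fun j => t j ≤ t (τ ⟨m, Nat.lt_succ_of_le (Nat.le_mul_of_pos_left m Nat.two_pos)⟩))).card := by
  have := Finset.card_le_card_of_injOn
    (s := Finset.Iic (⟨m, Nat.lt_succ_of_le (Nat.le_mul_of_pos_left m Nat.two_pos)⟩ : Fin (2*m+1)))
    (t := Finset.univ.filter (fun j => t j ≤ t (τ ⟨m, Nat.lt_succ_of_le (Nat.le_mul_of_pos_left m Nat.two_pos)⟩))) τ
    (fun i hi => by
      simp only [Finset.mem_coe, Finset.mem_filter, Finset.mem_univ, true_and]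
      exact h (Finset.mem_Iic.mp hi)) (τ.injective.injOn)
  simpa [Fin.card_Iic] using this

private lemma med_ge_count (m : ℕ) (t : Fin (2*m+1) → ℝ) (τ : Equiv.Perm (Fin (2*m+1)))
    (h : Monotone (t ∘ τ)) :
    m + 1 ≤ (Finset.univ.filter (fun j => t (τ ⟨m, Nat.lt_succ_of_le (Nat.le_mul_of_pos_left m Nat.two_pos)⟩) ≤ t j)).card := by
  have := Finset.card_le_card_of_injOn
    (s := Finset.Ici (⟨m, Nat.lt_succ_of_le (Nat.le_mul_of_pos_left m Nat.two_pos)⟩ : Fin (2*m+1)))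
    (t := Finset.univ.filter (fun j => t (τ ⟨m, Nat.lt_succ_of_le (Nat.le_mul_of_pos_left m Nat.two_pos)⟩) ≤ t j)) τ
    (fun i hi => by
      simp only [Finset.mem_coe, Finset.mem_filter, Finset.mem_univ, true_and]
      exact h (Finset.mem_Ici.mp hi)) (τ.injective.injOn)
  have hc : (Finset.Ici (⟨m, Nat.lt_succ_of_le (Nat.le_mul_of_pos_left m Nat.two_pos)⟩ : Fin (2*m+1))).card = m + 1 := by
    simp only [Fin.card_Ici]
    omega
  omega

/-- if at least m+1 values of t exceed M, the median of t exceeds M -/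
private lemma med_gt (m : ℕ) (t : Fin (2*m+1) → ℝ) (τ : Equiv.Perm (Fin (2*m+1)))
    (h : Monotone (t ∘ τ)) (M : ℝ)
    (hcard : m + 1 ≤ (Finset.univ.filter (fun j => M < t j)).card) :
    M < t (τ ⟨m, Nat.lt_succ_of_le (Nat.le_mul_of_pos_left m Nat.two_pos)⟩) := by
  by_contra hle
  push_neg at hle
  have h1 := med_le_count m t τ h
  have hsub : (Finset.univ.filter (fun j => t j ≤ t (τ ⟨m, Nat.lt_succ_of_le (Nat.le_mul_of_pos_left m Nat.two_pos)⟩))) ⊆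
      Finset.univ.filter (fun j => t j ≤ M) := by
    intro j hj
    simp only [Finset.mem_filter, Finset.mem_univ, true_and] at *
    linarith
  have h2 : m + 1 ≤ (Finset.univ.filter (fun j => t j ≤ M)).card :=
    le_trans h1 (Finset.card_le_card hsub)
  have hdisj : Disjoint (Finset.univ.filter (fun j => t j ≤ M))
      (Finset.univ.filter (fun j => M < t j)) := by
    rw [Finset.disjoint_filter]
    intro j _ hj
    linarith
  have := Finset.card_union_of_disjoint hdisj
  have hle2 : ((Finset.univ.filter (fun j => t j ≤ M)) ∪
      (Finset.univ.filter (fun j => M < t j))).card ≤ (2*m+1) := by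
    have := Finset.card_le_card (Finset.subset_univ ((Finset.univ.filter (fun j => t j ≤ M)) ∪
      (Finset.univ.filter (fun j => M < t j))))
    simpa using this
  omega

private lemma med_lt (m : ℕ) (t : Fin (2*m+1) → ℝ) (τ : Equiv.Perm (Fin (2*m+1)))
    (h : Monotone (t ∘ τ)) (M : ℝ)
    (hcard : m + 1 ≤ (Finset.univ.filter (fun j => t j < M)).card) :
    t (τ ⟨m, Nat.lt_succ_of_le (Nat.le_mul_of_pos_left m Nat.two_pos)⟩) < M := by
  by_contra hle
  push_neg at hle
  have h1 := med_ge_count m t τ h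
  have hsub : (Finset.univ.filter (fun j => t (τ ⟨m, Nat.lt_succ_of_le (Nat.le_mul_of_pos_left m Nat.two_pos)⟩) ≤ t j)) ⊆
      Finset.univ.filter (fun j => M ≤ t j) := by
    intro j hj
    simp only [Finset.mem_filter, Finset.mem_univ, true_and] at *
    linarith
  have h2 : m + 1 ≤ (Finset.univ.filter (fun j => M ≤ t j)).card :=
    le_trans h1 (Finset.card_le_card hsub)
  have hdisj : Disjoint (Finset.univ.filter (fun j => M ≤ t j))
      (Finset.univ.filter (fun j => t j < M)) := by
    rw [Finset.disjoint_filter]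
    intro j _ hj
    linarith
  have := Finset.card_union_of_disjoint hdisj
  have hle2 : ((Finset.univ.filter (fun j => M ≤ t j)) ∪
      (Finset.univ.filter (fun j => t j < M))).card ≤ (2*m+1) := by
    have := Finset.card_le_card (Finset.subset_univ ((Finset.univ.filter (fun j => M ≤ t j)) ∪
      (Finset.univ.filter (fun j => t j < M))))
    simpa using this
  omega

/-- Crossing the median changes the median. -/
theorem stmt_16 (m : ℕ) (s : Fin (2 * m + 1) → ℝ) (hs : Function.Injective s)
    (st : Fin (2 * m + 1) → ℝ) (k : Fin (2 * m + 1))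
    (hst : ∀ j, j ≠ k → st j = s j)
    (σ σ' : Equiv.Perm (Fin (2 * m + 1)))
    (hσ : Monotone (s ∘ σ)) (hσ' : Monotone (st ∘ σ')) :
    (s k < s (σ ⟨m, by omega⟩) ∧ st k > s (σ ⟨m, by omega⟩) →
      st (σ' ⟨m, by omega⟩) > s (σ ⟨m, by omega⟩)) ∧
    (s k > s (σ ⟨m, by omega⟩) ∧ st k < s (σ ⟨m, by omega⟩) →
      st (σ' ⟨m, by omega⟩) < s (σ ⟨m, by omega⟩)) := by
  set M := s (σ ⟨m, by omega⟩) with hM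
  have hmono : StrictMono (s ∘ σ) :=
    hσ.strictMono_of_injective (hs.comp σ.injective)
  -- exact counts for s
  have hle_eq : (Finset.univ.filter (fun j => s j ≤ M)).card = m + 1 := by
    have h1 : m + 1 ≤ (Finset.univ.filter (fun j => s j ≤ M)).card := med_le_count m s σ hσ
    have h2 : (Finset.univ.filter (fun j => s j ≤ M)).card ≤ m + 1 := by
      have := Finset.card_le_card_of_injOn
        (s := Finset.univ.filter (fun j => s j ≤ M))
        (t := Finset.Iic (⟨m, by omega⟩ : Fin (2*m+1))) (σ.symm)
        (fun j hj => by
          simp only [Finset.mem_coe, Finset.mem_filter, Finset.mem_univ, true_and] at hj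
          rw [Finset.mem_coe, Finset.mem_Iic]
          by_contra hgt
          push_neg at hgt
          have := hmono hgt
          simp only [Function.comp_apply, Equiv.apply_symm_apply] at this
          linarith) (σ.symm.injective.injOn)
      simpa [Fin.card_Iic] using this
    omega
  have hgt_eq : (Finset.univ.filter (fun j => M < s j)).card = m := by
    have := Finset.card_filter_add_card_filter_not
      (s := (Finset.univ : Finset (Fin (2*m+1)))) (p := fun j => s j ≤ M)
    simp only [Finset.card_univ, Fintype.card_fin] at this
    have heq : (Finset.univ.filter (fun j => ¬ s j ≤ M)) =
        (Finset.univ.filter (fun j => M < s j)) := by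
      apply Finset.filter_congr; intro j _; simp
    rw [heq] at this
    omega
  have hlt_eq : (Finset.univ.filter (fun j => s j < M)).card = m := by
    have hset : (Finset.univ.filter (fun j => s j ≤ M)) =
        insert (σ ⟨m, by omega⟩) (Finset.univ.filter (fun j => s j < M)) := by
      ext j
      simp only [Finset.mem_filter, Finset.mem_univ, true_and, Finset.mem_insert]
      constructor
      · intro hj
        rcases lt_or_eq_of_le hj with h | h
        · exact Or.inr h
        · exact Or.inl (hs h)
      · rintro (rfl | hj)
        · exact le_of_eq rfl
        · exact le_of_lt hj
    rw [hset, Finset.card_insert_of_notMem (by simp [hM])] at hle_eq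
    omega
  constructor
  · rintro ⟨hk1, hk2⟩
    apply med_gt m st σ' hσ' M
    have hknot : k ∉ Finset.univ.filter (fun j => M < s j) := by
      simp only [Finset.mem_filter, Finset.mem_univ, true_and, not_lt]
      linarith
    have hsub : insert k (Finset.univ.filter (fun j => M < s j)) ⊆
        Finset.univ.filter (fun j => M < st j) := by
      intro j hj
      rcases Finset.mem_insert.mp hj with h | h
      · subst h; simp only [Finset.mem_filter, Finset.mem_univ, true_and]; exact hk2
      · simp only [Finset.mem_filter, Finset.mem_univ, true_and] at h ⊢
        rcases eq_or_ne j k with rfl | hne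
        · exact hk2
        · rw [hst j hne]; exact h
    have := Finset.card_le_card hsub
    rw [Finset.card_insert_of_notMem hknot, hgt_eq] at this
    omega
  · rintro ⟨hk1, hk2⟩
    apply med_lt m st σ' hσ' M
    have hknot : k ∉ Finset.univ.filter (fun j => s j < M) := by
      simp only [Finset.mem_filter, Finset.mem_univ, true_and, not_lt]
      linarith
    have hsub : insert k (Finset.univ.filter (fun j => s j < M)) ⊆
        Finset.univ.filter (fun j => st j < M) := by
      intro j hj
      rcases Finset.mem_insert.mp hj with h | h
      · subst h; simp only [Finset.mem_filter, Finset.mem_univ, true_and]; exact hk2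
      · simp only [Finset.mem_filter, Finset.mem_univ, true_and] at h ⊢
        rcases eq_or_ne j k with rfl | hne
        · exact hk2
        · rw [hst j hne]; exact h
    have := Finset.card_le_card hsub
    rw [Finset.card_insert_of_notMem hknot, hlt_eq] at this
    omega
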